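/- The total masses of the occupation measures η^{φⁿ}_1 converge to 4 as n → ∞, while the total mass of the occupation measure of the limiting strategy φ(x) ≡ 2 is 2; hence the sequence η^{φ^{n_i}}_1 cannot converge weakly to η^φ_1 for any subsequence. -/

import Mathlib

open Filter Topology

/-- Transition kernel of the MDP of Example 5.1 on state space `ℕ` with actions `{1,2}`:
`0` is absorbing; action `1`: `p(0|x,1) = 2^{-x}`, `p(x|x,1) = 1 - 2^{-x}`;
action `2`: `p(0|x,2) = 1/2`, `p(x+1|x,2) = 1/2`. -/
noncomputable def Pkernel (a x y : ℕ) : ℝ :=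
  if x = 0 then (if y = 0 then 1 else 0)
  else if a = 1 then
    (if y = 0 then (1/2 : ℝ)^x else if y = x then 1 - (1/2 : ℝ)^x else 0)
  else (if y = 0 then (1/2 : ℝ) else if y = x + 1 then (1/2 : ℝ) else 0)

/-- `probn q t x y`: probability that the Markov chain with kernel `q` started at `x`
is at `y` at time `t`. -/
noncomputable def probn (q : ℕ → ℕ → ℝ) : ℕ → ℕ → ℕ → ℝ
  | 0, x, y => if y = x then 1 else 0
  | (t+1), x, y => ∑' z : ℕ, probn q t x z * q z y

/-- Occupation measure (marginal on states) of the stationary chain with kernel `q`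
started at `x₀`: expected total number of time steps spent at `y`. -/
noncomputable def occ (q : ℕ → ℕ → ℝ) (x₀ y : ℕ) : ℝ :=
  ∑' t : ℕ, probn q t x₀ y

/-- The deterministic stationary strategy `φⁿ`: action `2` on states `x ≤ n`,
action `1` on states `x > n`. -/
def phi (n x : ℕ) : ℕ := if x ≤ n then 2 else 1

/-- The Markov kernel induced by the strategy `φⁿ`. -/
noncomputable def qphi (n : ℕ) (x y : ℕ) : ℝ := Pkernel (phi n x) x y

/-- The Markov kernel induced by the stationary strategy `φ(x) ≡ 2`. -/
noncomputable def qphi2 (x y : ℕ) : ℝ := Pkernel 2 x y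

noncomputable def w (n t : ℕ) : ℝ :=
  if t ≤ n then (1/2)^t else (1/2)^n * (1 - (1/2:ℝ)^(n+1))^(t-n)

def st (n t : ℕ) : ℕ := if t ≤ n then t+1 else n+1

lemma tsum_pair (f : ℕ → ℝ) (a b : ℕ) (hab : a ≠ b)
    (h : ∀ y, y ≠ a → y ≠ b → f y = 0) : ∑' y, f y = f a + f b := by
  rw [tsum_eq_sum (s := ({a, b} : Finset ℕ)) (by
    intro y hy
    simp only [Finset.mem_insert, Finset.mem_singleton, not_or] at hy
    exact h y hy.1 hy.2)]
  exact Finset.sum_pair hab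

lemma probn_qphi (n t y : ℕ) :
    probn (qphi n) t 1 y =
      if y = 0 then 1 - w n t else if y = st n t then w n t else 0 := by
  induction t generalizing y with
  | zero =>
    simp only [probn, w, st, Nat.zero_le, if_pos, pow_zero]
    rcases y with _ | _ | y <;> norm_num
  | succ t ih =>
    have hst0 : (0:ℕ) ≠ st n t := by unfold st; split <;> omega
    have hq0 : ∀ z, qphi n 0 z = if z = 0 then 1 else 0 := by
      intro z; simp [qphi, Pkernel]
    rw [show probn (qphi n) (t+1) 1 y = ∑' z, probn (qphi n) t 1 z * qphi n z y from rfl]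
    rw [tsum_pair _ 0 (st n t) hst0 (by
      intro z hz0 hzst
      rw [ih z, if_neg hz0, if_neg hzst, zero_mul])]
    rw [ih 0, ih (st n t), if_pos rfl, if_neg (Ne.symm hst0), if_pos rfl, hq0 y]
    by_cases htn : t ≤ n
    · by_cases htn' : t + 1 ≤ n
      · -- case A : st n t = t+1 ≤ n, action 2
        have h1 : st n t = t + 1 := by simp [st, htn]
        have h2 : st n (t+1) = t + 2 := by simp [st, htn']
        have hw : w n t = (1/2:ℝ)^t := by simp [w, htn]
        have hw' : w n (t+1) = (1/2:ℝ)^(t+1) := by simp [w, htn']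
        have hq : qphi n (t+1) y = if y = 0 then (1/2:ℝ) else if y = t+2 then (1/2:ℝ) else 0 := by
          simp [qphi, Pkernel, phi, htn']
        rw [h1, hq, hw, h2, hw']
        by_cases hy0 : y = 0
        · simp [hy0]; ring
        · by_cases hy2 : y = t + 2 <;> simp [hy0, hy2] <;> ring
      · -- case B : t = n, st n t = n+1, action 1
        have htn2 : t = n := by omega
        subst htn2
        have h1 : st t t = t + 1 := by simp [st]
        have h2 : st t (t+1) = t + 1 := by simp [st]
        have hw : w t t = (1/2:ℝ)^t := by simp [w]
        have hw' : w t (t+1) = (1/2:ℝ)^t * (1 - (1/2:ℝ)^(t+1)) := by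
          simp [w]
        have hq : qphi t (t+1) y =
            if y = 0 then (1/2:ℝ)^(t+1) else if y = t+1 then 1 - (1/2:ℝ)^(t+1) else 0 := by
          simp [qphi, Pkernel, phi]
        rw [h1, hq, hw, h2, hw']
        by_cases hy0 : y = 0
        · simp [hy0]; ring
        · by_cases hy1 : y = t + 1 <;> simp [hy0, hy1] <;> ring
    · -- case C : t > n, st = n+1, action 1
      have h1 : st n t = n + 1 := by simp [st, htn]
      have h2 : st n (t+1) = n + 1 := by simp [st]; omega
      have hw : w n t = (1/2:ℝ)^n * (1 - (1/2:ℝ)^(n+1))^(t-n) := by simp [w, htn]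
      have hw' : w n (t+1) = (1/2:ℝ)^n * (1 - (1/2:ℝ)^(n+1))^(t+1-n) := by
        simp [w]; omega
      have hts : t + 1 - n = (t - n) + 1 := by omega
      have hq : qphi n (n+1) y =
          if y = 0 then (1/2:ℝ)^(n+1) else if y = n+1 then 1 - (1/2:ℝ)^(n+1) else 0 := by
        simp [qphi, Pkernel, phi]
      rw [h1, hq, hw, h2, hw', hts]
      by_cases hy0 : y = 0
      · simp [hy0]; ring
      · by_cases hy1 : y = n + 1 <;> simp [hy0, hy1] <;> ring

lemma occ_qphi_low (n y : ℕ) (h1 : 1 ≤ y) (h2 : y ≤ n) :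
    occ (qphi n) 1 y = (1/2:ℝ)^(y-1) := by
  unfold occ
  rw [tsum_eq_single (y-1) (by
    intro t ht
    rw [probn_qphi, if_neg (by omega), if_neg (by unfold st; split <;> omega)])]
  rw [probn_qphi, if_neg (by omega),
    if_pos (show y = st n (y-1) by unfold st; split <;> omega)]
  unfold w
  rw [if_pos (by omega)]

lemma occ_qphi_high (n y : ℕ) (h : n + 1 < y) : occ (qphi n) 1 y = 0 := by
  have h0 : ∀ t, probn (qphi n) t 1 y = 0 := by
    intro t
    rw [probn_qphi, if_neg (by omega), if_neg (by unfold st; split <;> omega)]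
  simp [occ, h0]

lemma occ_qphi_top (n : ℕ) : occ (qphi n) 1 (n+1) = 2 := by
  unfold occ
  have hp0 : (0:ℝ) < (1/2:ℝ)^(n+1) := by positivity
  have hp1 : (1/2:ℝ)^(n+1) ≤ 1/2 := by
    calc (1/2:ℝ)^(n+1) ≤ (1/2:ℝ)^1 :=
          pow_le_pow_of_le_one (by norm_num) (by norm_num) (by omega)
      _ = 1/2 := pow_one _
  set r := 1 - (1/2:ℝ)^(n+1) with hr
  have key : ∀ k : ℕ, probn (qphi n) (n + k) 1 (n+1) = (1/2:ℝ)^n * r^k := by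
    intro k
    rw [probn_qphi, if_neg (by omega),
      if_pos (show n+1 = st n (n+k) by unfold st; split <;> omega)]
    rcases k with _ | k
    · unfold w; rw [if_pos (by omega)]; simp
    · unfold w
      rw [if_neg (by omega), show n + (k+1) - n = k + 1 by omega]
  rw [← Function.Injective.tsum_eq (g := fun k : ℕ => n + k) (add_right_injective n) (by
    intro t ht
    simp only [Function.mem_support] at ht
    by_contra hc
    have htn : t < n := by
      simp only [Set.mem_range] at hc
      by_contra h'
      exact hc ⟨t - n, by omega⟩
    exact ht (by
      rw [probn_qphi, if_neg (by omega), if_neg (by unfold st; split <;> omega)]))]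
  simp only [key]
  rw [tsum_mul_left, tsum_geometric_of_lt_one (by rw [hr]; linarith) (by rw [hr]; linarith), hr,
    sub_sub_cancel, pow_succ, mul_inv, ← mul_assoc,
    mul_inv_cancel₀ (pow_ne_zero _ (by norm_num))]
  norm_num

lemma mass_qphi (n : ℕ) :
    (∑' y : ℕ, (if y = 0 then (0:ℝ) else occ (qphi n) 1 y)) = 4 - 2 * (1/2:ℝ)^n := by
  rw [tsum_eq_sum (s := Finset.range (n+2)) (by
    intro y hy
    simp only [Finset.mem_range] at hy
    rw [if_neg (by omega), occ_qphi_high n y (by omega)])]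
  rw [Finset.sum_range_succ, Finset.sum_range_succ']
  have hsum : ∑ k ∈ Finset.range n, (if k+1 = 0 then (0:ℝ) else occ (qphi n) 1 (k+1))
      = ∑ k ∈ Finset.range n, (1/2:ℝ)^k := by
    refine Finset.sum_congr rfl fun k hk => ?_
    simp only [Finset.mem_range] at hk
    rw [if_neg (by omega), occ_qphi_low n (k+1) (by omega) (by omega), Nat.add_sub_cancel]
  rw [hsum, if_pos rfl, if_neg (by omega), occ_qphi_top,
    geom_sum_eq (by norm_num : (1/2:ℝ) ≠ 1)]
  ring

lemma probn_qphi2 (t y : ℕ) :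
    probn qphi2 t 1 y =
      if y = 0 then 1 - (1/2:ℝ)^t else if y = t+1 then (1/2:ℝ)^t else 0 := by
  induction t generalizing y with
  | zero =>
    simp only [probn, pow_zero]
    rcases y with _ | _ | y <;> norm_num
  | succ t ih =>
    rw [show probn qphi2 (t+1) 1 y = ∑' z, probn qphi2 t 1 z * qphi2 z y from rfl]
    rw [tsum_pair _ 0 (t+1) (by omega) (by
      intro z hz0 hzst
      rw [ih z, if_neg hz0, if_neg hzst, zero_mul])]
    rw [ih 0, ih (t+1), if_pos rfl, if_neg (by omega), if_pos rfl]
    have hq0 : qphi2 0 y = if y = 0 then 1 else 0 := by simp [qphi2, Pkernel]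
    have hq : qphi2 (t+1) y =
        if y = 0 then (1/2:ℝ) else if y = t+2 then (1/2:ℝ) else 0 := by
      simp [qphi2, Pkernel]
    rw [hq0, hq]
    by_cases hy0 : y = 0
    · simp [hy0]; ring
    · by_cases hy2 : y = t + 2 <;> simp [hy0, hy2] <;> ring

lemma occ_qphi2 (y : ℕ) (h1 : 1 ≤ y) : occ qphi2 1 y = (1/2:ℝ)^(y-1) := by
  unfold occ
  rw [tsum_eq_single (y-1) (by
    intro t ht
    rw [probn_qphi2, if_neg (by omega), if_neg (by omega)])]
  rw [probn_qphi2, if_neg (by omega), if_pos (by omega)]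

lemma mass_qphi2 : (∑' y : ℕ, (if y = 0 then (0:ℝ) else occ qphi2 1 y)) = 2 := by
  rw [← Function.Injective.tsum_eq (g := fun k : ℕ => k + 1)
    (add_left_injective 1) (by
      intro y hy
      simp only [Function.mem_support] at hy
      rcases y with _ | y
      · simp at hy
      · exact ⟨y, rfl⟩)]
  have : ∀ k : ℕ, (if k + 1 = 0 then (0:ℝ) else occ qphi2 1 (k+1)) = (1/2:ℝ)^k := by
    intro k
    rw [if_neg (by omega), occ_qphi2 (k+1) (by omega), Nat.add_sub_cancel]
  simp only [this]
  rw [tsum_geometric_of_lt_one (by norm_num) (by norm_num)]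
  norm_num


theorem total_masses_preclude_weak_convergence :
    Tendsto (fun n : ℕ => ∑' y : ℕ, (if y = 0 then 0 else occ (qphi n) 1 y)) atTop (𝓝 4)
      ∧ (∑' y : ℕ, (if y = 0 then 0 else occ qphi2 1 y)) = 2
      ∧ ∀ s : ℕ → ℕ, StrictMono s →
          ¬ (∀ g : ℕ → ℝ, (∃ C, ∀ y, |g y| ≤ C) → g 0 = 0 →
              Tendsto (fun i : ℕ => ∑' y : ℕ, g y * occ (qphi (s i)) 1 y) atTop
                (𝓝 (∑' y : ℕ, g y * occ qphi2 1 y))) := by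
  have hmain : Tendsto (fun n : ℕ => ∑' y : ℕ,
      (if y = 0 then (0:ℝ) else occ (qphi n) 1 y)) atTop (𝓝 4) := by
    simp only [mass_qphi]
    have h0 : Tendsto (fun n : ℕ => (1/2:ℝ)^n) atTop (𝓝 0) :=
      tendsto_pow_atTop_nhds_zero_of_lt_one (by norm_num) (by norm_num)
    have := ((h0.const_mul 2).const_sub 4)
    simpa using this
  refine ⟨hmain, mass_qphi2, ?_⟩
  intro s hs hweak
  have hg := hweak (fun y => if y = 0 then 0 else 1)
    ⟨1, fun y => by split <;> norm_num⟩ (by simp)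
  have hrw : ∀ q : ℕ → ℕ → ℝ, (∑' y : ℕ, (if y = 0 then (0:ℝ) else 1) * occ q 1 y)
      = ∑' y : ℕ, (if y = 0 then (0:ℝ) else occ q 1 y) := by
    intro q
    refine tsum_congr fun y => ?_
    by_cases hy : y = 0 <;> simp [hy]
  simp only [hrw] at hg
  rw [mass_qphi2] at hg
  have h4 : Tendsto (fun i : ℕ => ∑' y : ℕ,
      (if y = 0 then (0:ℝ) else occ (qphi (s i)) 1 y)) atTop (𝓝 4) :=
    hmain.comp hs.tendsto_atTop
  have := tendsto_nhds_unique h4 hg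
  norm_num at this
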